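/- Let p be a prime, X = Z_p[t,t^{-1}]/(g(t)), n a positive integer, and a_i = p^{m_i} for nonnegative integers m_i (i = 1, ..., n-1). Define f : X^n → X by f(x_1, ..., x_n) = (x_1 - x_2)^{a_1} (x_2 - x_3)^{a_2} ··· (x_{n-1} - x_n)^{a_{n-1}}. Then f is a quandle n-cocycle of the Alexander quandle X with coefficients in X; that is, δf = 0 and f vanishes on degenerate tuples (x_i = x_{i+1} for some i). -/

import Mathlib

open LaurentPolynomial Finset
open Fin.NatCast

/-- Telescoping sum lemma. -/
private lemma tele_aux {A : Type*} [CommRing A] (S : ℕ → A) (h0 : S 0 = 0) (n : ℕ) :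
    (∑ i ∈ Finset.Ico 1 (n + 1), (-1 : A) ^ (i + 1) * (S i + S (i - 1))) +
      (-1 : A) ^ (n + 2) * S n = 0 := by
  induction n with
  | zero => simp [h0]
  | succ k ih =>
      rw [Finset.sum_Ico_succ_top (by omega)]
      simp only [Nat.add_sub_cancel]
      linear_combination ih

/-- Abstract algebraic core: the alternating sum vanishes. -/
private lemma main_alg {A : Type*} [CommRing A] (n : ℕ) (c e τ : ℕ → A) (F : ℕ → A)
    (h0 : F 0 = 0)
    (h1 : ∀ k, k < n → F (k + 1) = (-1 : A) ^ (k + 2) *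
      ((∏ j ∈ range k, c j) * ((c k + e k) * ∏ j ∈ Ico (k + 1) n, e j)
        - (∏ j ∈ range k, (τ j * c j)) * ((τ k * c k + e k) * ∏ j ∈ Ico (k + 1) n, e j)))
    (h2 : F (n + 1) = (-1 : A) ^ (n + 2) *
      ((∏ j ∈ range n, c j) - ∏ j ∈ range n, (τ j * c j))) :
    ∑ i ∈ range (n + 2), F i = 0 := by
  set S : ℕ → A := fun k =>
    ((∏ j ∈ range k, c j) - ∏ j ∈ range k, (τ j * c j)) * ∏ j ∈ Ico k n, e j with hS
  have hS0 : S 0 = 0 := by simp [hS]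
  have hSn : S n = (∏ j ∈ range n, c j) - ∏ j ∈ range n, (τ j * c j) := by
    simp [hS]
  have h2' : F (n + 1) = (-1 : A) ^ (n + 2) * S n := by rw [h2, hSn]
  have hstep : ∀ k, k < n → F (k + 1) = (-1 : A) ^ (k + 1 + 1) * (S (k + 1) + S k) := by
    intro k hk
    rw [h1 k hk, hS]
    simp only
    rw [prod_range_succ, prod_range_succ,
      Finset.prod_eq_prod_Ico_succ_bot hk e]
    ring
  rw [Finset.sum_range_succ, h2']
  rw [range_eq_Ico, Finset.sum_eq_sum_Ico_succ_bot (by omega), h0, zero_add]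
  have hcong : ∑ i ∈ Ico 1 (n + 1), F i
      = ∑ i ∈ Ico 1 (n + 1), (-1 : A) ^ (i + 1) * (S i + S (i - 1)) := by
    apply Finset.sum_congr rfl
    intro i hi
    simp only [mem_Ico] at hi
    obtain ⟨k, rfl⟩ : ∃ k, i = k + 1 := ⟨i - 1, by omega⟩
    rw [hstep k (by omega)]
    simp
  rw [hcong]
  exact tele_aux S hS0 n

/-- Splitting a product over `range n` at position `k < n`. -/
private lemma prod_split {A : Type*} [CommRing A] (n k : ℕ) (hk : k < n)
    (G c e : ℕ → A)
    (hc : ∀ j, j < k → G j = c j) (he : ∀ j, k < j → j < n → G j = e j) :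
    ∏ j ∈ range n, G j = (∏ j ∈ range k, c j) * (G k * ∏ j ∈ Ico (k + 1) n, e j) := by
  have h1 : ∏ j ∈ range n, G j
      = (∏ j ∈ range (k + 1), G j) * ∏ j ∈ Ico (k + 1) n, G j := by
    rw [range_eq_Ico, range_eq_Ico]
    exact (Finset.prod_Ico_consecutive G (Nat.zero_le (k + 1)) hk).symm
  have h2 : ∏ j ∈ range k, G j = ∏ j ∈ range k, c j :=
    Finset.prod_congr rfl (fun j hj => hc j (mem_range.mp hj))
  have h3 : ∏ j ∈ Ico (k + 1) n, G j = ∏ j ∈ Ico (k + 1) n, e j :=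
    Finset.prod_congr rfl (fun j hj => by
      rw [mem_Ico] at hj
      exact he j (by omega) hj.2)
  rw [h1, prod_range_succ, h2, h3, mul_assoc]

/-- Abstract form of the cocycle computation, over any commutative ring with a
"Frobenius-additive" family of exponents. -/
private lemma cocycle_alg {A : Type*} [CommRing A] (n : ℕ) (a : ℕ → ℕ) (t : A)
    (hfrob : ∀ (u v : A) (j : ℕ), (u + v) ^ a j = u ^ a j + v ^ a j)
    (x' : ℕ → A) (F : ℕ → A)
    (hFdef : ∀ i, F i = if 1 ≤ i then ((-1 : A) ^ (i + 1)) *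
        ((∏ j ∈ range n, ((if j < i then x' j else x' (j + 1))
            - (if j + 1 < i then x' (j + 1) else x' (j + 1 + 1))) ^ a j)
        - (∏ j ∈ range n, ((if j < i then t * x' j + (1 - t) * x' i else x' (j + 1))
            - (if j + 1 < i then t * x' (j + 1) + (1 - t) * x' i else x' (j + 1 + 1))) ^ a j))
      else 0) :
    ∑ i ∈ range (n + 2), F i = 0 := by
  refine main_alg n (fun j => (x' j - x' (j + 1)) ^ a j)
    (fun j => (x' (j + 1) - x' (j + 1 + 1)) ^ a j) (fun j => t ^ a j) F ?_ ?_ ?_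
  · rw [hFdef 0, if_neg (by omega)]
  · intro k hk
    rw [hFdef (k + 1), if_pos (by omega)]
    have e1 : (∏ j ∈ range n, ((if j < k + 1 then x' j else x' (j + 1))
          - (if j + 1 < k + 1 then x' (j + 1) else x' (j + 1 + 1))) ^ a j)
        = (∏ j ∈ range k, (x' j - x' (j + 1)) ^ a j) *
          (((x' k - x' (k + 1)) ^ a k + (x' (k + 1) - x' (k + 1 + 1)) ^ a k) *
            ∏ j ∈ Ico (k + 1) n, (x' (j + 1) - x' (j + 1 + 1)) ^ a j) := by
      rw [prod_split n k hk _ (fun j => (x' j - x' (j + 1)) ^ a j)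
        (fun j => (x' (j + 1) - x' (j + 1 + 1)) ^ a j)
        (fun j hj => by rw [if_pos (by omega), if_pos (by omega)])
        (fun j hj1 hj2 => by rw [if_neg (by omega), if_neg (by omega)])]
      rw [if_pos (by omega), if_neg (by omega)]
      rw [show x' k - x' (k + 1 + 1) = (x' k - x' (k + 1)) + (x' (k + 1) - x' (k + 1 + 1)) by ring,
        hfrob]
    have e2 : (∏ j ∈ range n, ((if j < k + 1 then t * x' j + (1 - t) * x' (k + 1)
            else x' (j + 1))
          - (if j + 1 < k + 1 then t * x' (j + 1) + (1 - t) * x' (k + 1) else x' (j + 1 + 1)))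
            ^ a j)
        = (∏ j ∈ range k, t ^ a j * (x' j - x' (j + 1)) ^ a j) *
          ((t ^ a k * (x' k - x' (k + 1)) ^ a k + (x' (k + 1) - x' (k + 1 + 1)) ^ a k) *
            ∏ j ∈ Ico (k + 1) n, (x' (j + 1) - x' (j + 1 + 1)) ^ a j) := by
      rw [prod_split n k hk _ (fun j => t ^ a j * (x' j - x' (j + 1)) ^ a j)
        (fun j => (x' (j + 1) - x' (j + 1 + 1)) ^ a j)
        (fun j hj => by
          rw [if_pos (by omega), if_pos (by omega),
            show (t * x' j + (1 - t) * x' (k + 1)) - (t * x' (j + 1) + (1 - t) * x' (k + 1))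
              = t * (x' j - x' (j + 1)) by ring, mul_pow])
        (fun j hj1 hj2 => by rw [if_neg (by omega), if_neg (by omega)])]
      rw [if_pos (by omega), if_neg (by omega)]
      rw [show (t * x' k + (1 - t) * x' (k + 1)) - x' (k + 1 + 1)
          = t * (x' k - x' (k + 1)) + (x' (k + 1) - x' (k + 1 + 1)) by ring, hfrob, mul_pow]
    rw [e1, e2]
  · rw [hFdef (n + 1), if_pos (by omega)]
    have e1 : (∏ j ∈ range n, ((if j < n + 1 then x' j else x' (j + 1))
          - (if j + 1 < n + 1 then x' (j + 1) else x' (j + 1 + 1))) ^ a j)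
        = ∏ j ∈ range n, (x' j - x' (j + 1)) ^ a j :=
      Finset.prod_congr rfl (fun j hj => by
        rw [mem_range] at hj
        rw [if_pos (by omega), if_pos (by omega)])
    have e2 : (∏ j ∈ range n, ((if j < n + 1 then t * x' j + (1 - t) * x' (n + 1)
            else x' (j + 1))
          - (if j + 1 < n + 1 then t * x' (j + 1) + (1 - t) * x' (n + 1) else x' (j + 1 + 1)))
            ^ a j)
        = ∏ j ∈ range n, t ^ a j * (x' j - x' (j + 1)) ^ a j :=
      Finset.prod_congr rfl (fun j hj => by
        rw [mem_range] at hj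
        rw [if_pos (by omega), if_pos (by omega),
          show (t * x' j + (1 - t) * x' (n + 1)) - (t * x' (j + 1) + (1 - t) * x' (n + 1))
            = t * (x' j - x' (j + 1)) by ring, mul_pow])
    rw [e1, e2]

set_option maxHeartbeats 2000000 in
/-- the polynomial expression
`f(x₁,…,xₙ) = (x₁-x₂)^{a₁} ⋯ (x_{n-1}-x_n)^{a_{n-1}}` with `aᵢ = p^{mᵢ}` is a
quandle n-cocycle of the Alexander quandle `X = Z_p[t,t⁻¹]/(g(t))` with
coefficients in `X`.  Here the paper's positive integer `n` is `n+1`. -/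
theorem stmt0 (p : ℕ) (hp : p.Prime) (g : LaurentPolynomial (ZMod p))
    (n : ℕ) (m : Fin n → ℕ) :
    let X := LaurentPolynomial (ZMod p) ⧸ Ideal.span {g}
    let t : X := Ideal.Quotient.mk (Ideal.span {g}) (T 1)
    let op : X → X → X := fun x y => t * x + (1 - t) * y
    let f : (Fin (n + 1) → X) → X :=
      fun x => ∏ i : Fin n, (x i.castSucc - x i.succ) ^ (p ^ m i)
    -- δf = 0 :
    (∀ x : Fin (n + 2) → X,
      (∑ i : Fin (n + 2), if 1 ≤ (i : ℕ) then
        ((-1 : X) ^ ((i : ℕ) + 1)) *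
          (f (fun j : Fin (n + 1) =>
              if (j : ℕ) < (i : ℕ) then x j.castSucc else x j.succ)
           - f (fun j : Fin (n + 1) =>
              if (j : ℕ) < (i : ℕ) then op (x j.castSucc) (x i) else x j.succ))
        else 0) = 0)
    -- f vanishes on degenerate tuples :
    ∧ (∀ x : Fin (n + 1) → X, ∀ i j : Fin (n + 1),
        (j : ℕ) = (i : ℕ) + 1 → x i = x j → f x = 0) := by
  intro X t op f
  haveI := Fact.mk hp
  haveI : CharP (LaurentPolynomial (ZMod p)) p :=
    charP_of_injective_ringHom (Polynomial.toLaurent_injective (R := ZMod p)) p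
  have hfrob : ∀ (u v : X) (k : ℕ), (u + v) ^ p ^ k = u ^ p ^ k + v ^ p ^ k := by
    intro u v k
    obtain ⟨u, rfl⟩ := Ideal.Quotient.mk_surjective u
    obtain ⟨v, rfl⟩ := Ideal.Quotient.mk_surjective v
    rw [← map_add, ← map_pow, ← map_pow, ← map_pow, add_pow_char_pow, map_add]
  -- extended exponent function
  set a : ℕ → ℕ := fun j => p ^ (if h : j < n then m ⟨j, h⟩ else 0) with ha
  have hfrob' : ∀ (u v : X) (j : ℕ), (u + v) ^ a j = u ^ a j + v ^ a j := by
    intro u v j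
    exact hfrob u v _
  -- f of a tuple expressed through a ℕ-indexed function
  have key : ∀ (z : Fin (n + 1) → X) (w : ℕ → X),
      (∀ j : ℕ, j ≤ n → z (j : Fin (n + 1)) = w j) →
      f z = ∏ j ∈ range n, (w j - w (j + 1)) ^ a j := by
    intro z w hw
    have h1 : f z = ∏ j : Fin n, (w (j : ℕ) - w ((j : ℕ) + 1)) ^ a (j : ℕ) := by
      show (∏ i : Fin n, (z i.castSucc - z i.succ) ^ p ^ m i) = _
      apply Finset.prod_congr rfl
      intro j _
      have hjn : (j : ℕ) < n := j.isLt
      have e1 : z j.castSucc = w (j : ℕ) := by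
        rw [← hw (j : ℕ) (by omega)]
        have : j.castSucc = ((j : ℕ) : Fin (n + 1)) := by
          refine Fin.ext ?_
          rw [Fin.coe_castSucc, Fin.val_cast_of_lt (show (j : ℕ) < n + 1 by omega)]
        rw [this]
      have e2 : z j.succ = w ((j : ℕ) + 1) := by
        rw [← hw ((j : ℕ) + 1) (by omega)]
        have : j.succ = (Nat.cast ((j : ℕ) + 1) : Fin (n + 1)) := by
          refine Fin.ext ?_
          rw [Fin.val_succ, Fin.val_cast_of_lt (show (j : ℕ) + 1 < n + 1 by omega)]
        rw [this]
      rw [e1, e2, ha]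
      simp only [dif_pos hjn]
    rw [h1, Fin.prod_univ_eq_prod_range (fun j => (w j - w (j + 1)) ^ a j) n]
  refine ⟨?_, ?_⟩
  · -- cocycle condition
    intro x
    set x' : ℕ → X := fun k => x (k : Fin (n + 2)) with hx'def
    have hx' : ∀ i : Fin (n + 2), x' (i : ℕ) = x i := by
      intro i
      rw [hx'def]
      simp only
      rw [Fin.cast_val_eq_self]
    have hcast : ∀ jn : ℕ, jn ≤ n →
        x (((jn : Fin (n + 1))).castSucc) = x' jn ∧
        x (((jn : Fin (n + 1))).succ) = x' (jn + 1) := by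
      intro jn hjn
      rw [hx'def]
      simp only
      constructor
      · have : ((jn : Fin (n + 1))).castSucc = ((jn : ℕ) : Fin (n + 2)) := by
          refine Fin.ext ?_
          rw [Fin.coe_castSucc, Fin.val_cast_of_lt (show jn < n + 1 by omega),
            Fin.val_cast_of_lt (show jn < n + 2 by omega)]
        rw [this]
      · have : ((jn : Fin (n + 1))).succ = (Nat.cast (jn + 1) : Fin (n + 2)) := by
          refine Fin.ext ?_
          rw [Fin.val_succ, Fin.val_cast_of_lt (show jn < n + 1 by omega),
            Fin.val_cast_of_lt (show jn + 1 < n + 2 by omega)]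
        rw [this]
    set F : ℕ → X := fun i => if 1 ≤ i then
      ((-1 : X) ^ (i + 1)) *
        (f (fun j : Fin (n + 1) => if (j : ℕ) < i then x j.castSucc else x j.succ)
          - f (fun j : Fin (n + 1) =>
              if (j : ℕ) < i then op (x j.castSucc) (x' i) else x j.succ))
      else 0 with hF
    have hFdef : ∀ i : ℕ, F i = if 1 ≤ i then ((-1 : X) ^ (i + 1)) *
        ((∏ j ∈ range n, ((if j < i then x' j else x' (j + 1))
            - (if j + 1 < i then x' (j + 1) else x' (j + 1 + 1))) ^ a j)
        - (∏ j ∈ range n, ((if j < i then t * x' j + (1 - t) * x' i else x' (j + 1))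
            - (if j + 1 < i then t * x' (j + 1) + (1 - t) * x' i else x' (j + 1 + 1))) ^ a j))
        else 0 := by
      intro i
      rw [hF]
      simp only
      by_cases hi : 1 ≤ i
      · rw [if_pos hi, if_pos hi]
        have k1 : f (fun j : Fin (n + 1) => if (j : ℕ) < i then x j.castSucc else x j.succ)
            = ∏ j ∈ range n, ((if j < i then x' j else x' (j + 1))
                - (if j + 1 < i then x' (j + 1) else x' (j + 1 + 1))) ^ a j := by
          refine key (fun j : Fin (n + 1) => if (j : ℕ) < i then x j.castSucc else x j.succ)
            (fun jn => if jn < i then x' jn else x' (jn + 1)) ?_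
          intro jn hjn
          simp only [Fin.val_cast_of_lt (show jn < n + 1 by omega)]
          rw [(hcast jn hjn).1, (hcast jn hjn).2]
        have k2 : f (fun j : Fin (n + 1) =>
              if (j : ℕ) < i then op (x j.castSucc) (x' i) else x j.succ)
            = ∏ j ∈ range n, ((if j < i then t * x' j + (1 - t) * x' i else x' (j + 1))
                - (if j + 1 < i then t * x' (j + 1) + (1 - t) * x' i else x' (j + 1 + 1)))
                ^ a j := by
          refine key (fun j : Fin (n + 1) =>
              if (j : ℕ) < i then op (x j.castSucc) (x' i) else x j.succ)
            (fun jn => if jn < i then t * x' jn + (1 - t) * x' i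
              else x' (jn + 1)) ?_
          intro jn hjn
          simp only [Fin.val_cast_of_lt (show jn < n + 1 by omega)]
          rw [(hcast jn hjn).1, (hcast jn hjn).2]
        rw [k1, k2]
      · rw [if_neg hi, if_neg hi]
    calc (∑ i : Fin (n + 2), if 1 ≤ (i : ℕ) then
        ((-1 : X) ^ ((i : ℕ) + 1)) *
          (f (fun j : Fin (n + 1) =>
              if (j : ℕ) < (i : ℕ) then x j.castSucc else x j.succ)
           - f (fun j : Fin (n + 1) =>
              if (j : ℕ) < (i : ℕ) then op (x j.castSucc) (x i) else x j.succ))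
        else 0)
        = ∑ i : Fin (n + 2), F (i : ℕ) := by
          refine Finset.sum_congr rfl (fun i _ => ?_)
          rw [hF]
          simp only [hx' i]
      _ = ∑ i ∈ range (n + 2), F i := Fin.sum_univ_eq_sum_range F (n + 2)
      _ = 0 := cocycle_alg n a t hfrob' x' F hFdef
  · -- degeneracy
    intro x i j hji hx
    have hi : (i : ℕ) < n := by
      have := j.isLt
      omega
    refine Finset.prod_eq_zero (Finset.mem_univ (⟨(i : ℕ), hi⟩ : Fin n)) ?_
    have e1 : Fin.castSucc (⟨(i : ℕ), hi⟩ : Fin n) = i := Fin.ext rfl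
    have e2 : Fin.succ (⟨(i : ℕ), hi⟩ : Fin n) = j := Fin.ext hji.symm
    rw [e1, e2, hx, sub_self]
    exact zero_pow (pow_ne_zero _ hp.ne_zero)
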